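/- arXiv:2104.08833 — 2 statements merged into one kernel-verified Lean document; each statement's English description precedes it below -/
import Mathlib

section
/- The Fubini-type numbers satisfy, for each n ≥ 1, the recurrence Σ_{k=0}^{n} C(n,k) · (Σ_{i=0}^{n−k} ⟨2α⟩_i · (−1)^i · S(n−k,i)) · a_k^{(α)} = 0. -/
open Finset PowerSeries

/-- Stirling numbers of the second kind. -/
def stirling2 : ℕ → ℕ → ℕ
  | 0, 0 => 1
  | 0, _ + 1 => 0
  | _ + 1, 0 => 0
  | n + 1, k + 1 => (k + 1) * stirling2 n (k + 1) + stirling2 n k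

/-- The falling factorial `⟨x⟩_i = x(x-1)⋯(x-i+1)`. -/
def fall (x : ℚ) (m : ℕ) : ℚ := ∏ j ∈ Finset.range m, (x - j)

lemma stirling2_eq_zero_of_lt : ∀ {m i : ℕ}, m < i → stirling2 m i = 0
  | 0, _ + 1, _ => rfl
  | _ + 1, _ + 1, h => by
    rw [stirling2, stirling2_eq_zero_of_lt (by omega), stirling2_eq_zero_of_lt (by omega)]
    ring

lemma fall_nat_cast (N : ℕ) : ∀ i : ℕ, fall (N : ℚ) i = (N.descFactorial i : ℚ)
  | 0 => by simp [fall]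
  | i + 1 => by
    rw [fall, Finset.prod_range_succ, ← fall, fall_nat_cast N i, Nat.descFactorial_succ]
    rcases le_or_gt i N with h | h
    · push_cast [h]; ring
    · rw [Nat.descFactorial_eq_zero_iff_lt.2 h]; push_cast; ring

lemma derivExpQ : d⁄dX ℚ (exp ℚ) = exp ℚ := by
  ext n
  rw [PowerSeries.coeff_derivative, coeff_exp, coeff_exp]
  simp only [Algebra.algebraMap_self, RingHom.id_apply]
  field_simp [Nat.factorial_succ]
  rw [Nat.factorial_succ]; push_cast; ring

lemma key (i : ℕ) : ∀ m : ℕ, (m.factorial : ℚ) * coeff m ((exp ℚ - 1) ^ i) =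
    (i.factorial : ℚ) * stirling2 m i := by
  induction i with
  | zero => intro m
            cases m with
            | zero => simp [stirling2]
            | succ m => simp [stirling2, coeff_one]
  | succ i ih =>
    intro m
    induction m with
    | zero =>
      simp only [coeff_zero_eq_constantCoeff, map_pow, map_sub, map_one,
        PowerSeries.constantCoeff_exp, sub_self, zero_pow (Nat.succ_ne_zero i)]
      simp [stirling2]
    | succ m ihm =>
      have hd : d⁄dX ℚ ((exp ℚ - 1) ^ (i + 1)) =
          ((i : ℚ) + 1) • ((exp ℚ - 1) ^ (i + 1) + (exp ℚ - 1) ^ i) := by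
        rw [Derivation.leibniz_pow, map_sub, derivExpQ, Derivation.map_one_eq_zero, sub_zero, Nat.succ_sub_one]
        rw [PowerSeries.smul_eq_C_mul]
        simp only [smul_eq_mul, nsmul_eq_mul]
        rw [← map_natCast (C (R := ℚ)) (i + 1)]
        push_cast
        ring
      have hc := congrArg (coeff m) hd
      rw [PowerSeries.coeff_derivative] at hc
      simp only [map_smul, map_add, smul_eq_mul] at hc
      have h1 : ((m + 1).factorial : ℚ) * coeff (m + 1) ((exp ℚ - 1) ^ (i + 1)) =
          (m.factorial : ℚ) * (coeff (m + 1) ((exp ℚ - 1) ^ (i + 1)) * (m + 1)) := by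
        rw [Nat.factorial_succ]; push_cast; ring
      rw [h1, hc,
        show stirling2 (m + 1) (i + 1) = (i + 1) * stirling2 m (i + 1) + stirling2 m i from rfl]
      have ih2 := ih m
      push_cast [Nat.factorial_succ] at ihm ih2 ⊢
      linear_combination ((i : ℚ) + 1) * ihm + ((i : ℚ) + 1) * ih2

lemma coeffF (N m : ℕ) : (m.factorial : ℚ) * coeff m ((2 - exp ℚ) ^ N) =
    ∑ i ∈ Finset.range (m + 1), fall (N : ℚ) i * (-1 : ℚ) ^ i * (stirling2 m i : ℚ) := by
  have h2 : (2 : ℚ⟦X⟧) - exp ℚ = (-(exp ℚ - 1)) + 1 := by ring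
  have hsum : ∑ j ∈ Finset.range (N + 1),
      fall (N : ℚ) j * (-1 : ℚ) ^ j * (stirling2 m j : ℚ) =
      ∑ i ∈ Finset.range (m + 1), fall (N : ℚ) i * (-1 : ℚ) ^ i * (stirling2 m i : ℚ) := by
    rw [Finset.sum_subset (Finset.range_subset_range.2 (by omega : N + 1 ≤ N + m + 1)),
        Finset.sum_subset (Finset.range_subset_range.2 (by omega : m + 1 ≤ N + m + 1))]
    · intro x hx hnx
      rw [Finset.mem_range] at hnx
      rw [stirling2_eq_zero_of_lt (by omega)]
      push_cast; ring
    · intro x hx hnx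
      rw [Finset.mem_range] at hnx
      rw [fall_nat_cast, Nat.descFactorial_eq_zero_iff_lt.2 (by omega)]
      push_cast; ring
  rw [← hsum, h2, add_pow]
  simp only [one_pow, mul_one, map_sum]
  rw [Finset.mul_sum]
  refine Finset.sum_congr rfl fun j hj => ?_
  rw [Finset.mem_range, Nat.lt_succ_iff] at hj
  have hcoe : coeff m ((-(exp ℚ - 1)) ^ j * (N.choose j : ℚ⟦X⟧)) =
      (N.choose j : ℚ) * ((-1 : ℚ) ^ j * coeff m ((exp ℚ - 1) ^ j)) := by
    rw [neg_pow, mul_comm, ← map_natCast (C (R := ℚ)) (N.choose j),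
      show ((-1 : ℚ⟦X⟧)) = C (-1 : ℚ) from by simp, ← map_pow, ← mul_assoc, ← map_mul,
      PowerSeries.coeff_C_mul]
    ring
  rw [hcoe, fall_nat_cast, Nat.descFactorial_eq_factorial_mul_choose]
  have := key j m
  push_cast
  linear_combination ((-1 : ℚ)) ^ j * (N.choose j : ℚ) * this

theorem fubiniTypeNumbers_recurrence (α : ℕ) (hα : 1 ≤ α) (a : ℕ → ℚ)
    (ha : ((2 : PowerSeries ℚ) - PowerSeries.exp ℚ) ^ (2 * α) *
          PowerSeries.mk (fun n => a n / n.factorial) =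
        (2 : PowerSeries ℚ) ^ α)
    (n : ℕ) (hn : 1 ≤ n) :
    ∑ k ∈ Finset.range (n + 1), (n.choose k : ℚ) *
        (∑ i ∈ Finset.range (n - k + 1),
          fall ((2 * α : ℚ)) i * (-1 : ℚ) ^ i * (stirling2 (n - k) i : ℚ)) * a k = 0 := by
  have hF : ∀ m : ℕ, coeff m ((2 - exp ℚ) ^ (2 * α)) =
      (∑ i ∈ Finset.range (m + 1),
        fall ((2 * α : ℚ)) i * (-1 : ℚ) ^ i * (stirling2 m i : ℚ)) / m.factorial := by
    intro m
    have h := coeffF (2 * α) m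
    have hc : ((2 * α : ℕ) : ℚ) = 2 * (α : ℚ) := by push_cast; ring
    rw [hc] at h
    rw [eq_div_iff (by exact_mod_cast m.factorial_ne_zero)]
    linarith [h]
  have h := congrArg (coeff n) ha
  have h2 : (2 : ℚ⟦X⟧) ^ α = C ((2 : ℚ) ^ α) := by rw [map_pow, map_ofNat]
  rw [coeff_mul, Finset.Nat.sum_antidiagonal_eq_sum_range_succ_mk, h2, coeff_C,
    if_neg (by omega)] at h
  simp only [coeff_mk] at h
  rw [← Finset.sum_range_reflect]
  simp only [Nat.add_sub_cancel]
  have hterm : ∀ k ∈ Finset.range (n + 1),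
      (n.choose (n - k) : ℚ) *
        (∑ i ∈ Finset.range (n - (n - k) + 1),
          fall ((2 * α : ℚ)) i * (-1 : ℚ) ^ i * (stirling2 (n - (n - k)) i : ℚ)) * a (n - k)
      = (n.factorial : ℚ) *
          (coeff k ((2 - exp ℚ) ^ (2 * α)) * (a (n - k) / (n - k).factorial)) := by
    intro k hk
    rw [Finset.mem_range, Nat.lt_succ_iff] at hk
    rw [Nat.sub_sub_self hk, Nat.choose_symm hk, hF k]
    have hfac : (n.factorial : ℚ) = (n.choose k : ℚ) * k.factorial * (n - k).factorial := by
      exact_mod_cast (Nat.choose_mul_factorial_mul_factorial hk).symm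
    rw [hfac]
    have h1 : (k.factorial : ℚ) ≠ 0 := by exact_mod_cast k.factorial_ne_zero
    have h2 : ((n - k).factorial : ℚ) ≠ 0 := by exact_mod_cast (n - k).factorial_ne_zero
    field_simp
  rw [Finset.sum_congr rfl hterm, ← Finset.mul_sum, h, mul_zero]
end

section
/- The generalized Apostol-Euler polynomials of order 2α at γ = −1/2 satisfy E_n^{(2α)}(x; −1/2) = 2^{4α} · Σ_{k=0}^{n} C(n,k) · (Σ_{i=0}^{k} ⟨−2α⟩_i · (−1)^i · S(k,i)) · x^{n−k}. -/
open Finset PowerSeries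

lemma stirling2_eq_zero : ∀ k i, k < i → stirling2 k i = 0
  | 0, i + 1, _ => rfl
  | k + 1, i + 1, h => by
    have h1 := stirling2_eq_zero k (i + 1) (by omega)
    have h2 := stirling2_eq_zero k i (by omega)
    simp [stirling2, h1, h2]

lemma stirling2_zero_left : ∀ i, stirling2 0 i = if i = 0 then 1 else 0
  | 0 => rfl
  | _ + 1 => rfl

lemma sum_choose_stirling : ∀ n i, ∑ k ∈ Finset.range (n + 1), n.choose k * stirling2 k i
    = (i + 1) * stirling2 n (i + 1) + stirling2 n i := by
  intro n
  induction n with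
  | zero => intro i; simp [stirling2_zero_left]
  | succ n ih =>
    intro i
    have key : ∑ k ∈ Finset.range (n + 2), (n+1).choose k * stirling2 k i
        = (∑ k ∈ Finset.range (n + 1), n.choose k * stirling2 (k+1) i)
          + ∑ k ∈ Finset.range (n + 1), n.choose k * stirling2 k i := by
      rw [Finset.sum_range_succ' (fun k => (n+1).choose k * stirling2 k i) (n+1)]
      have h1 : ∀ k, (n+1).choose (k+1) * stirling2 (k+1) i
          = n.choose k * stirling2 (k+1) i + n.choose (k+1) * stirling2 (k+1) i := by
        intro k; rw [Nat.choose_succ_succ, add_mul]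
      simp only [h1, Finset.sum_add_distrib]
      have h2 : (∑ k ∈ Finset.range (n + 1), n.choose (k+1) * stirling2 (k+1) i)
          + (n+1).choose 0 * stirling2 0 i
          = ∑ k ∈ Finset.range (n + 1), n.choose k * stirling2 k i := by
        rw [show (n+1).choose 0 * stirling2 0 i = n.choose 0 * stirling2 0 i by simp,
          ← Finset.sum_range_succ' (fun k => n.choose k * stirling2 k i) (n+1),
          Finset.sum_range_succ (fun k => n.choose k * stirling2 k i) (n+1)]
        simp [Nat.choose_succ_self]
      omega
    rw [key, ih]
    cases i with
    | zero =>
      have : ∀ k, stirling2 (k+1) 0 = 0 := fun k => rfl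
      simp only [this, mul_zero, Finset.sum_const_zero, zero_add]
      show 1 * stirling2 n 1 + stirling2 n 0 = (0+1) * stirling2 (n+1) (0+1) + stirling2 (n+1) 0
      simp [stirling2]
    | succ j =>
      have h3 : ∀ k, n.choose k * stirling2 (k+1) (j+1)
          = (j+1) * (n.choose k * stirling2 k (j+1)) + n.choose k * stirling2 k j := by
        intro k; show n.choose k * ((j + 1) * stirling2 k (j+1) + stirling2 k j) = _; ring
      simp only [h3, Finset.sum_add_distrib, ← Finset.mul_sum, ih]
      show (j+1) * ((j+1+1) * stirling2 n (j+1+1) + stirling2 n (j+1))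
          + ((j+1) * stirling2 n (j+1) + stirling2 n j)
          + ((j+1+1) * stirling2 n (j+1+1) + stirling2 n (j+1))
        = (j+1+1) * stirling2 (n+1) (j+1+1) + stirling2 (n+1) (j+1)
      show _ = (j+1+1) * ((j+1+1) * stirling2 n (j+1+1) + stirling2 n (j+1))
          + ((j+1) * stirling2 n (j+1) + stirling2 n j)
      ring


lemma stirling2_zero_left' (k : ℕ) : stirling2 k 0 = if k = 0 then 1 else 0 := by
  cases k <;> rfl

def Rq (m i : ℕ) : ℚ := ∏ j ∈ Finset.range i, ((m : ℚ) + j)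

def bq (m k : ℕ) : ℚ := ∑ i ∈ Finset.range (k + 1), Rq m i * stirling2 k i

lemma Rq_succ_sub (m i : ℕ) : Rq (m+1) (i+1) - Rq m (i+1) = (i+1) * Rq (m+1) i := by
  have h1 : Rq (m+1) (i+1) = Rq (m+1) i * ((m:ℚ) + 1 + i) := by
    rw [Rq, Finset.prod_range_succ]; push_cast [Rq]; ring
  have h2 : Rq m (i+1) = (m : ℚ) * Rq (m+1) i := by
    rw [Rq, Finset.prod_range_succ' (fun j => (m:ℚ) + j),
      show ((m:ℚ) + ((0:ℕ):ℚ)) = (m:ℚ) by push_cast; ring, mul_comm, Rq]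
    congr 1
    apply Finset.prod_congr rfl; intros; push_cast; ring
  rw [h1, h2]; ring

lemma shift (m n : ℕ) :
    ∑ i ∈ Finset.range (n+1), Rq (m+1) i * (i+1) * stirling2 n (i+1)
      = ∑ i ∈ Finset.range (n+1), (Rq (m+1) i - Rq m i) * stirling2 n i := by
  rw [Finset.sum_range_succ, stirling2_eq_zero n (n+1) (by omega),
    Finset.sum_range_succ' (fun i => (Rq (m+1) i - Rq m i) * (stirling2 n i : ℚ))]
  have hRq0 : ∀ m', Rq m' 0 = 1 := fun m' => Finset.prod_range_zero _
  simp only [Nat.cast_zero, mul_zero, add_zero, hRq0, sub_self, zero_mul]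
  apply Finset.sum_congr rfl
  intro i _
  rw [Rq_succ_sub]; ring

lemma bq_key (m n : ℕ) :
    bq m n + ∑ k ∈ Finset.range (n+1), (n.choose k : ℚ) * bq (m+1) k = 2 * bq (m+1) n := by
  have hswap : ∑ k ∈ Finset.range (n+1), (n.choose k : ℚ) * bq (m+1) k
      = ∑ i ∈ Finset.range (n+1), Rq (m+1) i *
          (((i+1) * stirling2 n (i+1) + stirling2 n i : ℕ) : ℚ) := by
    have h1 : ∀ k ∈ Finset.range (n+1), (n.choose k : ℚ) * bq (m+1) k
        = ∑ i ∈ Finset.range (n+1), Rq (m+1) i * ((n.choose k * stirling2 k i : ℕ) : ℚ) := by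
      intro k hk
      rw [Finset.mem_range] at hk
      rw [bq, Finset.mul_sum]
      rw [← Finset.sum_subset (Finset.range_subset_range.2 (by omega) :
        Finset.range (k+1) ⊆ Finset.range (n+1))]
      · apply Finset.sum_congr rfl; intros; push_cast; ring
      · intro i _ hi
        rw [Finset.mem_range] at hi
        rw [stirling2_eq_zero k i (by omega)]
        simp
    rw [Finset.sum_congr rfl h1, Finset.sum_comm]
    apply Finset.sum_congr rfl
    intro i _
    rw [← Finset.mul_sum, ← sum_choose_stirling n i]
    push_cast [Finset.mul_sum]
    ring_nf
  rw [hswap]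
  have expand : ∑ i ∈ Finset.range (n+1), Rq (m+1) i *
      (((i+1) * stirling2 n (i+1) + stirling2 n i : ℕ) : ℚ)
      = (∑ i ∈ Finset.range (n+1), Rq (m+1) i * (i+1) * stirling2 n (i+1))
        + ∑ i ∈ Finset.range (n+1), Rq (m+1) i * stirling2 n i := by
    rw [← Finset.sum_add_distrib]
    apply Finset.sum_congr rfl; intros; push_cast; ring
  rw [expand, shift, bq, bq, ← Finset.sum_add_distrib, ← Finset.sum_add_distrib,
    Finset.mul_sum]
  apply Finset.sum_congr rfl; intros; ring


lemma coeff_mul_mk (f g : ℕ → ℚ) (n : ℕ) :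
    PowerSeries.coeff (R := ℚ) n (PowerSeries.mk (fun k => f k / k.factorial) *
      PowerSeries.mk (fun k => g k / k.factorial))
    = (∑ k ∈ Finset.range (n + 1), (n.choose k : ℚ) * f k * g (n - k)) / n.factorial := by
  rw [PowerSeries.coeff_mul, Finset.Nat.sum_antidiagonal_eq_sum_range_succ
    (fun a b => PowerSeries.coeff (R := ℚ) a (PowerSeries.mk (fun k => f k / k.factorial)) *
      PowerSeries.coeff (R := ℚ) b (PowerSeries.mk (fun k => g k / k.factorial)))]
  simp only [PowerSeries.coeff_mk]
  rw [Finset.sum_div]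
  apply Finset.sum_congr rfl
  intro k hk
  rw [Finset.mem_range] at hk
  rw [Nat.cast_choose ℚ (by omega : k ≤ n)]
  have h1 : (k.factorial : ℚ) ≠ 0 := Nat.cast_ne_zero.2 k.factorial_ne_zero
  have h2 : ((n - k).factorial : ℚ) ≠ 0 := Nat.cast_ne_zero.2 (n - k).factorial_ne_zero
  have h3 : (n.factorial : ℚ) ≠ 0 := Nat.cast_ne_zero.2 n.factorial_ne_zero
  field_simp

lemma exp_eq_mk : PowerSeries.exp ℚ = PowerSeries.mk (fun k => (1 : ℚ) / k.factorial) := by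
  ext n
  simp [PowerSeries.coeff_exp, PowerSeries.coeff_mk]

lemma two_eq_C : (2 : PowerSeries ℚ) = PowerSeries.C (R := ℚ) 2 := (map_ofNat _ 2).symm


def Bser (m : ℕ) : PowerSeries ℚ := PowerSeries.mk (fun k => bq m k / k.factorial)

lemma Rq_zero_left (i : ℕ) : Rq 0 (i + 1) = 0 := by
  rw [Rq]
  apply Finset.prod_eq_zero (Finset.mem_range.2 (Nat.succ_pos i))
  norm_num

lemma bq_zero (k : ℕ) : bq 0 k = if k = 0 then 1 else 0 := by
  rw [bq, Finset.sum_eq_single_of_mem 0 (Finset.mem_range.2 (Nat.succ_pos k))]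
  · rw [show Rq 0 0 = 1 from Finset.prod_range_zero _, one_mul, stirling2_zero_left']
    split <;> norm_num
  · intro i _ hi
    obtain ⟨i', rfl⟩ := Nat.exists_eq_succ_of_ne_zero hi
    rw [Rq_zero_left, zero_mul]

lemma Bser_zero : Bser 0 = 1 := by
  ext n
  rw [Bser, PowerSeries.coeff_mk, PowerSeries.coeff_one, bq_zero]
  cases n with
  | zero => simp
  | succ n => simp

lemma L1 (m : ℕ) : Bser (m + 1) * PowerSeries.exp ℚ + Bser m = 2 * Bser (m + 1) := by
  ext n
  rw [map_add, two_eq_C, PowerSeries.coeff_C_mul, exp_eq_mk]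
  simp only [Bser, coeff_mul_mk, PowerSeries.coeff_mk, mul_one]
  have h := bq_key m n
  have h3 : (n.factorial : ℚ) ≠ 0 := Nat.cast_ne_zero.2 n.factorial_ne_zero
  field_simp
  linarith

lemma L2 : ∀ m, (PowerSeries.C (R := ℚ) (-(1 / 2)) * PowerSeries.exp ℚ + 1) ^ m * Bser m
    = PowerSeries.C (R := ℚ) ((1 / 2) ^ m) := by
  intro m
  induction m with
  | zero => simp [Bser_zero]
  | succ m ih =>
    have hA : PowerSeries.C (R := ℚ) (-(1 / 2)) = -PowerSeries.C (R := ℚ) (1 / 2) := by rw [map_neg]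
    have hB : PowerSeries.C (R := ℚ) (1 / 2) * 2 = 1 := by
      rw [two_eq_C, ← map_mul]; norm_num
    have hstep : (PowerSeries.C (R := ℚ) (-(1 / 2)) * PowerSeries.exp ℚ + 1) * Bser (m + 1)
        = PowerSeries.C (R := ℚ) (1 / 2) * Bser m := by
      have h := L1 m
      linear_combination (PowerSeries.exp ℚ * Bser (m + 1)) * hA
        + (- PowerSeries.C (R := ℚ) (1 / 2)) * h - Bser (m + 1) * hB
    rw [pow_succ, mul_assoc, hstep, mul_left_comm, ih, ← map_mul]
    congr 1
    ring

theorem apostolEuler_explicit (α : ℕ) (E : ℕ → ℚ → ℚ)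
    (hE : ∀ x : ℚ,
      (PowerSeries.C (R := ℚ) (-(1 / 2)) * PowerSeries.exp ℚ + 1) ^ (2 * α) *
          PowerSeries.mk (fun n => E n x / n.factorial) =
        (2 : PowerSeries ℚ) ^ (2 * α) * PowerSeries.mk (fun n => x ^ n / n.factorial))
    (n : ℕ) (x : ℚ) :
    E n x = 2 ^ (4 * α) * ∑ k ∈ Finset.range (n + 1), (n.choose k : ℚ) *
        (∑ i ∈ Finset.range (k + 1),
          fall (-(2 * α : ℚ)) i * (-1 : ℚ) ^ i * (stirling2 k i : ℚ)) * x ^ (n - k) := by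
  have hbq : ∀ k, (∑ i ∈ Finset.range (k + 1),
      fall (-(2 * α : ℚ)) i * (-1 : ℚ) ^ i * (stirling2 k i : ℚ)) = bq (2 * α) k := by
    intro k
    rw [bq]
    apply Finset.sum_congr rfl
    intro i _
    have key : fall (-(2 * α : ℚ)) i * (-1 : ℚ) ^ i = Rq (2 * α) i := by
      rw [fall, Rq, show ((-1 : ℚ)) ^ i = ∏ _j ∈ Finset.range i, (-1 : ℚ) by simp,
        ← Finset.prod_mul_distrib]
      apply Finset.prod_congr rfl
      intro j _
      push_cast
      ring
    rw [key]
  have hE' := hE x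
  have hT : (PowerSeries.C (R := ℚ) (-(1 / 2)) * PowerSeries.exp ℚ + 1) ^ (2 * α) *
        (PowerSeries.C (R := ℚ) (2 ^ (4 * α)) *
          (Bser (2 * α) * PowerSeries.mk (fun n => x ^ n / n.factorial)))
      = (2 : PowerSeries ℚ) ^ (2 * α) * PowerSeries.mk (fun n => x ^ n / n.factorial) := by
    have h2 := L2 (2 * α)
    have hc : (2 : ℚ) ^ (4 * α) * (1 / 2) ^ (2 * α) = 2 ^ (2 * α) := by
      rw [one_div, inv_pow, show 4 * α = 2 * α + 2 * α by ring, pow_add]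
      field_simp
    calc (PowerSeries.C (R := ℚ) (-(1 / 2)) * PowerSeries.exp ℚ + 1) ^ (2 * α) *
          (PowerSeries.C (R := ℚ) (2 ^ (4 * α)) *
            (Bser (2 * α) * PowerSeries.mk (fun n => x ^ n / n.factorial)))
        = PowerSeries.C (R := ℚ) (2 ^ (4 * α)) *
            (((PowerSeries.C (R := ℚ) (-(1 / 2)) * PowerSeries.exp ℚ + 1) ^ (2 * α) * Bser (2 * α)) *
              PowerSeries.mk (fun n => x ^ n / n.factorial)) := by ring
      _ = (PowerSeries.C (R := ℚ) (2 ^ (4 * α)) * PowerSeries.C (R := ℚ) ((1 / 2) ^ (2 * α))) *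
            PowerSeries.mk (fun n => x ^ n / n.factorial) := by rw [h2]; ring
      _ = PowerSeries.C (R := ℚ) (2 ^ (2 * α)) * PowerSeries.mk (fun n => x ^ n / n.factorial) := by
            rw [← map_mul, hc]
      _ = (2 : PowerSeries ℚ) ^ (2 * α) * PowerSeries.mk (fun n => x ^ n / n.factorial) := by
            rw [two_eq_C, ← map_pow]
  have hne : (PowerSeries.C (R := ℚ) (-(1 / 2)) * PowerSeries.exp ℚ + 1) ^ (2 * α) ≠ 0 := by
    apply pow_ne_zero
    intro h0
    have hcc := congrArg (PowerSeries.constantCoeff (R := ℚ)) h0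
    simp [PowerSeries.constantCoeff_exp] at hcc
    norm_num at hcc
  have hcancel : PowerSeries.mk (fun n => E n x / n.factorial)
      = PowerSeries.C (R := ℚ) (2 ^ (4 * α)) *
          (Bser (2 * α) * PowerSeries.mk (fun n => x ^ n / n.factorial)) :=
    mul_left_cancel₀ hne (by rw [hE', hT])
  have hco := congrArg (PowerSeries.coeff (R := ℚ) n) hcancel
  rw [PowerSeries.coeff_mk, PowerSeries.coeff_C_mul] at hco
  have hBE : PowerSeries.coeff (R := ℚ) n
        (Bser (2 * α) * PowerSeries.mk (fun n => x ^ n / n.factorial))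
      = (∑ k ∈ Finset.range (n + 1),
          (n.choose k : ℚ) * bq (2 * α) k * x ^ (n - k)) / n.factorial :=
    coeff_mul_mk (bq (2 * α)) (fun k => x ^ k) n
  rw [hBE] at hco
  have h3 : (n.factorial : ℚ) ≠ 0 := Nat.cast_ne_zero.2 n.factorial_ne_zero
  have hsum : ∑ k ∈ Finset.range (n + 1), (n.choose k : ℚ) *
        (∑ i ∈ Finset.range (k + 1),
          fall (-(2 * α : ℚ)) i * (-1 : ℚ) ^ i * (stirling2 k i : ℚ)) * x ^ (n - k)
      = ∑ k ∈ Finset.range (n + 1), (n.choose k : ℚ) * bq (2 * α) k * x ^ (n - k) :=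
    Finset.sum_congr rfl (fun k _ => by rw [hbq k])
  rw [hsum]
  field_simp at hco
  linarith
end
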